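/- arXiv:0805.1422 — 5 statements merged into one kernel-verified Lean document; each statement's English description precedes it below -/
import Mathlib

section
/- Let a : ℝ≥0 → ℝ be bounded continuous, f : ℝ≥0 × ℝ → ℝ continuous with |f(t,x) − f(t,y)| ≤ m(t)|x − y| for a continuous m : ℝ≥0 → ℝ≥0, and u : ℝ≥0 × ℝ≥0 × ℝ × ℝ → ℝ continuous with |u(t,s,x₂,y₂) − u(t,s,x₁,y₁)| ≤ n(t)Φ(|x₂−x₁|, |y₂−y₁|) for a continuous n and a continuous nondecreasing Φ with Φ(0,0)=0. Set u*(t) = max{|u(t,s,0,0)| : 0 ≤ s ≤ t}. Then for any bounded continuous x : ℝ≥0 → ℝ with ‖x‖ ≤ r and any t ≥ 0, with λ ∈ (0,1) and α ∈ (0,1): |a(t) + (f(t,x(t))/Γ(α)) ∫₀^t u(t,s,x(s),x(λs))(t−s)^{α−1} ds| ≤ ‖a‖ + (1/Γ(α+1))[φ(t)·r·Φ(r,r) + ψ(t)·r + ξ(t)·Φ(r,r) + η(t)], where φ(t) = m(t)n(t)t^α, ψ(t) = m(t)u*(t)t^α, ξ(t) = n(t)|f(t,0)|t^α, η(t) =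 u*(t)|f(t,0)|t^α. -/
open Real intervalIntegral

theorem stmt8 (α l : ℝ) (hα : 0 < α) (hα1 : α < 1) (hl : 0 < l) (hl1 : l < 1)
    (a m n : ℝ → ℝ) (f : ℝ → ℝ → ℝ) (u : ℝ → ℝ → ℝ → ℝ → ℝ) (Φ : ℝ → ℝ → ℝ)
    (ustar : ℝ → ℝ) (A r : ℝ)
    -- a bounded continuous, with sup norm A
    (ha : ContinuousOn a (Set.Ici 0))
    (hA : IsLUB ((fun t => |a t|) '' Set.Ici 0) A)
    -- f continuous and Lipschitz in the second variable with coefficient m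
    (hf : ContinuousOn (fun p : ℝ × ℝ => f p.1 p.2) (Set.Ici 0 ×ˢ Set.univ))
    (hmc : ContinuousOn m (Set.Ici 0)) (hm0 : ∀ t ∈ Set.Ici (0:ℝ), 0 ≤ m t)
    (hLip : ∀ t ∈ Set.Ici (0:ℝ), ∀ x y : ℝ, |f t x - f t y| ≤ m t * |x - y|)
    -- u continuous with modulus n(t) Φ
    (hu : ContinuousOn (fun p : ℝ × ℝ × ℝ × ℝ => u p.1 p.2.1 p.2.2.1 p.2.2.2)
      (Set.Ici 0 ×ˢ Set.Ici 0 ×ˢ Set.univ ×ˢ Set.univ))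
    (hnc : ContinuousOn n (Set.Ici 0)) (hn0 : ∀ t ∈ Set.Ici (0:ℝ), 0 ≤ n t)
    (hΦc : ContinuousOn (fun p : ℝ × ℝ => Φ p.1 p.2) (Set.Ici 0 ×ˢ Set.Ici 0))
    (hΦmono : ∀ p q p' q' : ℝ, 0 ≤ p → 0 ≤ q → p ≤ p' → q ≤ q' → Φ p q ≤ Φ p' q')
    (hΦ0 : Φ 0 0 = 0)
    (hΦnn : ∀ p q : ℝ, 0 ≤ p → 0 ≤ q → 0 ≤ Φ p q)
    (humod : ∀ t s : ℝ, 0 ≤ s → s ≤ t → ∀ x₁ y₁ x₂ y₂ : ℝ,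
      |u t s x₂ y₂ - u t s x₁ y₁| ≤ n t * Φ |x₂ - x₁| |y₂ - y₁|)
    -- u*(t) = max of |u(t,s,0,0)| over s ∈ [0,t]
    (hustar : ∀ t ∈ Set.Ici (0:ℝ),
      IsGreatest ((fun s => |u t s 0 0|) '' Set.Icc 0 t) (ustar t))
    -- x in the ball of radius r of BC(ℝ≥0)
    (x : ℝ → ℝ) (hx : ContinuousOn x (Set.Ici 0)) (hr : 0 ≤ r)
    (hxr : ∀ t ∈ Set.Ici (0:ℝ), |x t| ≤ r) :
    ∀ t ∈ Set.Ici (0:ℝ),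
      |a t + (f t (x t) / Real.Gamma α) *
          ∫ s in (0:ℝ)..t, u t s (x s) (x (l * s)) * (t - s) ^ (α - 1)| ≤
        A + (1 / Real.Gamma (α + 1)) *
          ((m t * n t * t ^ α) * r * Φ r r + (m t * ustar t * t ^ α) * r +
            (n t * |f t 0| * t ^ α) * Φ r r + ustar t * |f t 0| * t ^ α) := by
  intro t ht
  have ht0 : (0:ℝ) ≤ t := ht
  have hΓ : 0 < Real.Gamma α := Real.Gamma_pos_of_pos hα
  have hust := hustar t ht
  have hust0 : 0 ≤ ustar t :=
    le_trans (abs_nonneg _) (hust.2 ⟨0, ⟨le_refl 0, ht0⟩, rfl⟩)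
  have hΦrr : 0 ≤ Φ r r := hΦnn r r hr hr
  have hnt : 0 ≤ n t := hn0 t ht
  have hmt : 0 ≤ m t := hm0 t ht
  set C := n t * Φ r r + ustar t with hCdef
  have hC0 : 0 ≤ C := add_nonneg (mul_nonneg hnt hΦrr) hust0
  -- pointwise bound on u
  have hub : ∀ s ∈ Set.Ioc (0:ℝ) t, |u t s (x s) (x (l * s))| ≤ C := by
    intro s hs
    have hs0 : 0 ≤ s := hs.1.le
    have hls : 0 ≤ l * s := mul_nonneg hl.le hs0
    have h1 : |u t s (x s) (x (l * s)) - u t s 0 0| ≤ n t * Φ |x s - 0| |x (l * s) - 0| :=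
      humod t s hs0 hs.2 0 0 _ _
    have h2 : Φ |x s - 0| |x (l * s) - 0| ≤ Φ r r := by
      simpa using hΦmono |x s| |x (l * s)| r r (abs_nonneg _) (abs_nonneg _)
        (hxr s hs0) (hxr _ hls)
    have h3 : |u t s 0 0| ≤ ustar t := hust.2 ⟨s, ⟨hs0, hs.2⟩, rfl⟩
    calc |u t s (x s) (x (l * s))|
        = |(u t s (x s) (x (l * s)) - u t s 0 0) + u t s 0 0| := by ring_nf
      _ ≤ |u t s (x s) (x (l * s)) - u t s 0 0| + |u t s 0 0| := abs_add_le _ _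
      _ ≤ n t * Φ |x s - 0| |x (l * s) - 0| + ustar t := add_le_add h1 h3
      _ ≤ n t * Φ r r + ustar t := by nlinarith
  -- the kernel integral
  have hKint : IntervalIntegrable (fun s => (t - s) ^ (α - 1)) MeasureTheory.volume 0 t := by
    have h1 : IntervalIntegrable (fun s : ℝ => s ^ (α - 1)) MeasureTheory.volume 0 t :=
      intervalIntegrable_rpow' (by linarith)
    have h2 := h1.comp_sub_left t
    simpa using h2.symm
  have hKval : (∫ s in (0:ℝ)..t, (t - s) ^ (α - 1)) = t ^ α / α := by
    rw [intervalIntegral.integral_comp_sub_left (fun s => s ^ (α - 1)) t]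
    rw [integral_rpow (Or.inl (by linarith))]
    rw [sub_add_cancel]
    simp [Real.zero_rpow hα.ne', sub_self]
  have hKnn : (0:ℝ) ≤ ∫ s in (0:ℝ)..t, (t - s) ^ (α - 1) := by
    rw [hKval]
    positivity
  -- bound the integral
  have hIb : |∫ s in (0:ℝ)..t, u t s (x s) (x (l * s)) * (t - s) ^ (α - 1)|
      ≤ C * (t ^ α / α) := by
    have hbd : IntervalIntegrable (fun s => C * (t - s) ^ (α - 1)) MeasureTheory.volume 0 t :=
      hKint.const_mul C
    have h := intervalIntegral.norm_integral_le_abs_of_norm_le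
      (f := fun s => u t s (x s) (x (l * s)) * (t - s) ^ (α - 1))
      (g := fun s => C * (t - s) ^ (α - 1)) (μ := MeasureTheory.volume) (a := 0) (b := t)
      ?_ hbd
    · have heq : (∫ s in (0:ℝ)..t, C * (t - s) ^ (α - 1)) = C * (t ^ α / α) := by
        rw [intervalIntegral.integral_const_mul, hKval]
      rw [heq] at h
      calc |∫ s in (0:ℝ)..t, u t s (x s) (x (l * s)) * (t - s) ^ (α - 1)|
          ≤ |C * (t ^ α / α)| := h
        _ = C * (t ^ α / α) := abs_of_nonneg (by positivity)
    · filter_upwards [MeasureTheory.ae_restrict_mem measurableSet_uIoc] with s hs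
      rw [Set.uIoc_of_le ht0] at hs
      have hK0 : (0:ℝ) ≤ (t - s) ^ (α - 1) := Real.rpow_nonneg (by linarith [hs.2]) _
      rw [Real.norm_eq_abs, abs_mul, abs_of_nonneg hK0]
      exact mul_le_mul_of_nonneg_right (hub s hs) hK0
  -- bound on f
  have hfb : |f t (x t)| ≤ m t * r + |f t 0| := by
    have h1 := hLip t ht (x t) 0
    have h2 : |x t| ≤ r := hxr t ht
    have h3 : |f t (x t)| ≤ |f t (x t) - f t 0| + |f t 0| := by
      calc |f t (x t)| = |(f t (x t) - f t 0) + f t 0| := by ring_nf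
        _ ≤ _ := abs_add_le _ _
    have h4 : m t * |x t - 0| ≤ m t * r := by
      rw [sub_zero]; exact mul_le_mul_of_nonneg_left h2 hmt
    linarith
  have habs : |a t| ≤ A := hA.1 ⟨t, ht, rfl⟩
  have hΓ1 : Real.Gamma (α + 1) = α * Real.Gamma α := Real.Gamma_add_one hα.ne'
  have hmain : |a t + (f t (x t) / Real.Gamma α) *
      ∫ s in (0:ℝ)..t, u t s (x s) (x (l * s)) * (t - s) ^ (α - 1)|
      ≤ A + (m t * r + |f t 0|) * (C * (t ^ α / α)) / Real.Gamma α := by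
    calc |a t + (f t (x t) / Real.Gamma α) *
        ∫ s in (0:ℝ)..t, u t s (x s) (x (l * s)) * (t - s) ^ (α - 1)|
        ≤ |a t| + |(f t (x t) / Real.Gamma α) *
          ∫ s in (0:ℝ)..t, u t s (x s) (x (l * s)) * (t - s) ^ (α - 1)| := abs_add_le _ _
      _ ≤ A + (m t * r + |f t 0|) * (C * (t ^ α / α)) / Real.Gamma α := by
          have h5 : |(f t (x t) / Real.Gamma α) *
              ∫ s in (0:ℝ)..t, u t s (x s) (x (l * s)) * (t - s) ^ (α - 1)|
              = |f t (x t)| / Real.Gamma α *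
                |∫ s in (0:ℝ)..t, u t s (x s) (x (l * s)) * (t - s) ^ (α - 1)| := by
            rw [abs_mul, abs_div, abs_of_nonneg hΓ.le]
          have h6 : |f t (x t)| / Real.Gamma α *
              |∫ s in (0:ℝ)..t, u t s (x s) (x (l * s)) * (t - s) ^ (α - 1)|
              ≤ (m t * r + |f t 0|) / Real.Gamma α * (C * (t ^ α / α)) := by
            apply mul_le_mul (by gcongr) hIb (abs_nonneg _)
            positivity
          rw [h5]
          have : (m t * r + |f t 0|) / Real.Gamma α * (C * (t ^ α / α))
              = (m t * r + |f t 0|) * (C * (t ^ α / α)) / Real.Gamma α := by ring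
          linarith [h6, habs]
  have hrhs : A + (m t * r + |f t 0|) * (C * (t ^ α / α)) / Real.Gamma α
      = A + (1 / Real.Gamma (α + 1)) *
          ((m t * n t * t ^ α) * r * Φ r r + (m t * ustar t * t ^ α) * r +
            (n t * |f t 0| * t ^ α) * Φ r r + ustar t * |f t 0| * t ^ α) := by
    rw [hΓ1, hCdef]
    field_simp
    ring
  linarith [hmain, hrhs.ge, hrhs.le]
end

section
/- Under the hypotheses of the main existence theorem (a bounded continuous; f Lipschitz in x with continuous coefficient m; u with modulus n(t)Φ; φ(t)=m(t)n(t)t^α, ψ(t)=m(t)u*(t)t^α, ξ(t)=n(t)|f(t,0)|t^α, η(t)=u*(t)|f(t,0)|t^α all bounded with φ, ξ → 0 at ∞; and existence of r₀ > 0 with ‖a‖Γ(α+1) + φ*r₀Φ(r₀,r₀) + ψ*r₀ + ξ*Φ(r₀,r₀) + η* ≤ r₀Γ(α+1) and φ*Φ(r₀,r₀) + ψ* < Γ(α+1)), the operator F defined by (Fx)(t) = a(t) + (f(t,x(t))/Γ(α)) ∫₀^t u(t,s,x(s),x(λs))(t−s)^{α−1} ds maps the closed ball B_{r₀} of BC(ℝ≥0)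 into itself. -/
open Real intervalIntegral


lemma aux_ker_intble (α : ℝ) (hα : 0 < α) (t : ℝ) :
    IntervalIntegrable (fun s => (t - s) ^ (α - 1)) MeasureTheory.volume 0 t := by
  have h := (intervalIntegrable_rpow' (a := t) (b := 0) (r := α - 1)
    (by linarith)).comp_sub_left t
  simpa using h

lemma aux_ker_integral (α : ℝ) (hα : 0 < α) {t : ℝ} (ht : 0 ≤ t) :
    ∫ s in (0:ℝ)..t, (t - s) ^ (α - 1) = t ^ α / α := by
  have h := intervalIntegral.integral_comp_sub_left (a := 0) (b := t)
      (fun s => s ^ (α - 1)) t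
  simp only [sub_self, sub_zero] at h
  rw [h, integral_rpow (Or.inl (by linarith))]
  rw [Real.zero_rpow (by linarith : α - 1 + 1 ≠ 0)]
  ring_nf

lemma aux_subst (α : ℝ) (hα : 0 < α) (v : ℝ → ℝ) {t : ℝ} (ht : 0 ≤ t) :
    (∫ s in (0:ℝ)..t, v s * (t - s) ^ (α - 1)) =
      t ^ α * ∫ τ in (0:ℝ)..1, v (t * τ) * (1 - τ) ^ (α - 1) := by
  rcases ht.eq_or_lt with h | h
  · subst h
    simp [Real.zero_rpow hα.ne']
  · have key := intervalIntegral.smul_integral_comp_mul_left (a := 0) (b := 1)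
      (fun s => v s * (t - s) ^ (α - 1)) t
    simp only [mul_zero, mul_one] at key
    have hcongr : (∫ τ in (0:ℝ)..1, v (t * τ) * (t - t * τ) ^ (α - 1)) =
        t ^ (α - 1) * ∫ τ in (0:ℝ)..1, v (t * τ) * (1 - τ) ^ (α - 1) := by
      rw [← intervalIntegral.integral_const_mul]
      apply intervalIntegral.integral_congr
      intro τ hτ
      rw [Set.uIcc_of_le (by norm_num : (0:ℝ) ≤ 1)] at hτ
      simp only []
      have h1 : t - t * τ = t * (1 - τ) := by ring
      rw [h1, Real.mul_rpow h.le (by linarith [hτ.2])]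
      ring
    rw [← key, hcongr, smul_eq_mul, ← mul_assoc]
    congr 1
    rw [← Real.rpow_one_add' h.le (by linarith)]
    norm_num

/-- Under hypotheses (h₁)–(h₅), the operator
`(𝓕x)(t) = a(t) + (f(t,x(t))/Γ(α)) ∫₀ᵗ u(t,s,x(s),x(λs)) (t-s)^{α-1} ds`
maps the ball `B_{r₀}` of `BC(ℝ≥0)` into itself. -/
theorem stmt9
    (α l : ℝ) (hα : 0 < α) (hα1 : α < 1) (hl : 0 < l) (hl1 : l < 1)
    (a m n : ℝ → ℝ) (f : ℝ → ℝ → ℝ) (u : ℝ → ℝ → ℝ → ℝ → ℝ) (Φ : ℝ → ℝ → ℝ)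
    (ustar : ℝ → ℝ) (normA φs ψs ξs ηs r₀ : ℝ)
    -- (h₁) : a is continuous and bounded on ℝ≥0, with sup norm normA
    (ha : ContinuousOn a (Set.Ici 0))
    (hA : IsLUB ((fun t => |a t|) '' Set.Ici 0) normA)
    -- (h₂) : f is continuous and Lipschitz in its second variable with coefficient m
    (hf : ContinuousOn (fun p : ℝ × ℝ => f p.1 p.2) (Set.Ici 0 ×ˢ Set.univ))
    (hmc : ContinuousOn m (Set.Ici 0)) (hm0 : ∀ t ∈ Set.Ici (0:ℝ), 0 ≤ m t)
    (hLip : ∀ t ∈ Set.Ici (0:ℝ), ∀ x y : ℝ, |f t x - f t y| ≤ m t * |x - y|)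
    -- (h₃) : u is continuous with modulus of continuity n(t) Φ
    (hu : ContinuousOn (fun p : ℝ × ℝ × ℝ × ℝ => u p.1 p.2.1 p.2.2.1 p.2.2.2)
      (Set.Ici 0 ×ˢ Set.Ici 0 ×ˢ Set.univ ×ˢ Set.univ))
    (hnc : ContinuousOn n (Set.Ici 0)) (hn0 : ∀ t ∈ Set.Ici (0:ℝ), 0 ≤ n t)
    (hΦc : ContinuousOn (fun p : ℝ × ℝ => Φ p.1 p.2) (Set.Ici 0 ×ˢ Set.Ici 0))
    (hΦmono : ∀ p q p' q' : ℝ, 0 ≤ p → 0 ≤ q → p ≤ p' → q ≤ q' → Φ p q ≤ Φ p' q')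
    (hΦ0 : Φ 0 0 = 0)
    (hΦnn : ∀ p q : ℝ, 0 ≤ p → 0 ≤ q → 0 ≤ Φ p q)
    (humod : ∀ t s : ℝ, 0 ≤ s → s ≤ t → ∀ x₁ y₁ x₂ y₂ : ℝ,
      |u t s x₂ y₂ - u t s x₁ y₁| ≤ n t * Φ |x₂ - x₁| |y₂ - y₁|)
    -- u*(t) = max_{0 ≤ s ≤ t} |u(t,s,0,0)|
    (hustar : ∀ t ∈ Set.Ici (0:ℝ),
      IsGreatest ((fun s => |u t s 0 0|) '' Set.Icc 0 t) (ustar t))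
    -- (h₄) : φ, ψ, ξ, η are bounded with suprema φ*, ψ*, ξ*, η*, and φ, ξ → 0 at ∞
    (hφlub : IsLUB ((fun t => m t * n t * t ^ α) '' Set.Ici 0) φs)
    (hψlub : IsLUB ((fun t => m t * ustar t * t ^ α) '' Set.Ici 0) ψs)
    (hξlub : IsLUB ((fun t => n t * |f t 0| * t ^ α) '' Set.Ici 0) ξs)
    (hηlub : IsLUB ((fun t => ustar t * |f t 0| * t ^ α) '' Set.Ici 0) ηs)
    (hφ0 : Filter.Tendsto (fun t => m t * n t * t ^ α) Filter.atTop (nhds 0))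
    (hξ0 : Filter.Tendsto (fun t => n t * |f t 0| * t ^ α) Filter.atTop (nhds 0))
    -- (h₅)
    (hr₀ : 0 < r₀)
    (hineq : normA * Real.Gamma (α + 1) +
      (φs * r₀ * Φ r₀ r₀ + ψs * r₀ + ξs * Φ r₀ r₀ + ηs) ≤ r₀ * Real.Gamma (α + 1))
    (hk : φs * Φ r₀ r₀ + ψs < Real.Gamma (α + 1))
    -- x ∈ B_{r₀}
    (x : ℝ → ℝ) (hx : ContinuousOn x (Set.Ici 0))
    (hxr : ∀ t ∈ Set.Ici (0:ℝ), |x t| ≤ r₀) :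
    ContinuousOn
      (fun t : ℝ => a t + (f t (x t) / Real.Gamma α) *
        ∫ s in (0:ℝ)..t, u t s (x s) (x (l * s)) * (t - s) ^ (α - 1))
      (Set.Ici 0) ∧
    ∀ t ∈ Set.Ici (0:ℝ),
      |a t + (f t (x t) / Real.Gamma α) *
        ∫ s in (0:ℝ)..t, u t s (x s) (x (l * s)) * (t - s) ^ (α - 1)| ≤ r₀ := by
  classical
  have hΓ : 0 < Real.Gamma α := Real.Gamma_pos_of_pos hα
  have hΓ1 : Real.Gamma (α + 1) = α * Real.Gamma α := Real.Gamma_add_one hα.ne'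
  have hΓ1pos : 0 < Real.Gamma (α + 1) := by rw [hΓ1]; positivity
  have hΦrnn : 0 ≤ Φ r₀ r₀ := hΦnn r₀ r₀ hr₀.le hr₀.le
  -- joint continuity of (t,s) ↦ u t s (x s) (x (l s))
  have hW : ContinuousOn (fun p : ℝ × ℝ => u p.1 p.2 (x p.2) (x (l * p.2)))
      (Set.Ici 0 ×ˢ Set.Ici 0) := by
    have h1 : ContinuousOn (fun p : ℝ × ℝ => (p.1, (p.2, (x p.2, x (l * p.2)))))
        (Set.Ici 0 ×ˢ Set.Ici 0) := by
      apply ContinuousOn.prodMk continuousOn_fst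
      apply ContinuousOn.prodMk continuousOn_snd
      apply ContinuousOn.prodMk
      · exact hx.comp continuousOn_snd (fun p hp => hp.2)
      · exact hx.comp (continuousOn_const.mul continuousOn_snd)
          (fun p hp => mul_nonneg hl.le hp.2)
    exact hu.comp h1 (fun p hp => ⟨hp.1, hp.2, trivial, trivial⟩)
  set G : ℝ → ℝ := fun t =>
    ∫ τ in (0:ℝ)..1, u t (t * τ) (x (t * τ)) (x (l * (t * τ))) * (1 - τ) ^ (α - 1) with hGdef
  have hsub : ∀ t ∈ Set.Ici (0:ℝ),
      (∫ s in (0:ℝ)..t, u t s (x s) (x (l * s)) * (t - s) ^ (α - 1)) = t ^ α * G t :=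
    fun t ht => aux_subst α hα (fun s => u t s (x s) (x (l * s))) ht
  have hI : Set.uIoc (0:ℝ) 1 = Set.Ioc 0 1 := Set.uIoc_of_le zero_le_one
  have kerint : IntervalIntegrable (fun τ : ℝ => (1 - τ) ^ (α - 1)) MeasureTheory.volume 0 1 := by
    have h := (intervalIntegrable_rpow' (a := 1) (b := 0) (r := α - 1)
      (by linarith)).comp_sub_left 1
    simpa using h
  have hG : ContinuousOn G (Set.Ici 0) := by
    intro t₀ ht₀
    obtain ⟨C, hC⟩ := ((isCompact_Icc (a := (0:ℝ)) (b := t₀ + 1)).prod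
        (isCompact_Icc (a := (0:ℝ)) (b := t₀ + 1))).exists_bound_of_continuousOn
      (hW.mono (Set.prod_mono Set.Icc_subset_Ici_self Set.Icc_subset_Ici_self))
    apply intervalIntegral.continuousWithinAt_of_dominated_interval
      (bound := fun τ => |C| * (1 - τ) ^ (α - 1))
    · filter_upwards [self_mem_nhdsWithin] with t htIci
      have ht : (0:ℝ) ≤ t := htIci
      apply MeasureTheory.AEStronglyMeasurable.mul
      · have hcont : ContinuousOn (fun τ => u t (t * τ) (x (t * τ)) (x (l * (t * τ))))
            (Set.Ioc 0 1) := by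
          apply hW.comp (continuousOn_const.prodMk (continuousOn_const.mul continuousOn_id))
          intro τ hτ
          exact ⟨ht, mul_nonneg ht hτ.1.le⟩
        rw [hI]
        exact hcont.aestronglyMeasurable measurableSet_Ioc
      · exact (kerint.def').aestronglyMeasurable
    · have hT' : Set.Iio (t₀ + 1) ∈ nhdsWithin t₀ (Set.Ici 0) :=
        nhdsWithin_le_nhds (Iio_mem_nhds (show t₀ < t₀ + 1 by linarith))
      filter_upwards [hT', self_mem_nhdsWithin] with t htT htIci
      have ht : (0:ℝ) ≤ t := htIci
      apply MeasureTheory.ae_of_all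
      intro τ hτ
      rw [hI] at hτ
      have h1τ : 0 ≤ 1 - τ := by linarith [hτ.2]
      have hmem : ((t, t * τ) : ℝ × ℝ) ∈ Set.Icc (0:ℝ) (t₀+1) ×ˢ Set.Icc (0:ℝ) (t₀+1) := by
        refine ⟨⟨ht, le_of_lt (Set.mem_Iio.mp htT)⟩, ⟨mul_nonneg ht hτ.1.le, ?_⟩⟩
        calc t * τ ≤ t * 1 := mul_le_mul_of_nonneg_left hτ.2 ht
          _ ≤ t₀ + 1 := by linarith [le_of_lt (Set.mem_Iio.mp htT)]
      have hCb := hC _ hmem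
      rw [Real.norm_eq_abs] at hCb ⊢
      rw [abs_mul, abs_of_nonneg (Real.rpow_nonneg h1τ _)]
      exact mul_le_mul_of_nonneg_right (le_trans hCb (le_abs_self C))
        (Real.rpow_nonneg h1τ _)
    · exact kerint.const_mul _
    · apply MeasureTheory.ae_of_all
      intro τ hτ
      rw [hI] at hτ
      have hcont : ContinuousOn (fun t => u t (t * τ) (x (t * τ)) (x (l * (t * τ))))
          (Set.Ici 0) := by
        apply hW.comp (continuousOn_id.prodMk (continuousOn_id.mul continuousOn_const))
        intro t ht
        exact ⟨ht, mul_nonneg ht hτ.1.le⟩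
      exact (hcont t₀ ht₀).mul continuousWithinAt_const
  constructor
  · -- continuity
    have hfx : ContinuousOn (fun t => f t (x t)) (Set.Ici 0) :=
      hf.comp (continuousOn_id.prodMk hx) (fun t ht => ⟨ht, trivial⟩)
    have htα : ContinuousOn (fun t : ℝ => t ^ α) (Set.Ici 0) :=
      ContinuousOn.rpow_const continuousOn_id (fun t _ => Or.inr hα.le)
    have hcont : ContinuousOn
        (fun t => a t + f t (x t) / Real.Gamma α * (t ^ α * G t)) (Set.Ici 0) :=
      ha.add ((hfx.div_const _).mul (htα.mul hG))
    exact hcont.congr (fun t ht => by simp only [hsub t ht])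
  · -- bound
    intro t ht
    have ht' : (0:ℝ) ≤ t := ht
    have hustar_ub : ∀ s ∈ Set.Icc (0:ℝ) t, |u t s 0 0| ≤ ustar t :=
      fun s hs => (hustar t ht).2 ⟨s, hs, rfl⟩
    have hust_nn : 0 ≤ ustar t :=
      le_trans (abs_nonneg _) (hustar_ub 0 ⟨le_refl 0, ht'⟩)
    have hm := hm0 t ht
    have hn := hn0 t ht
    have hK : ∀ s ∈ Set.Icc (0:ℝ) t,
        |u t s (x s) (x (l * s))| ≤ ustar t + n t * Φ r₀ r₀ := by
      intro s hs
      have h1 := humod t s hs.1 hs.2 0 0 (x s) (x (l * s))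
      simp only [sub_zero] at h1
      have h2 : Φ |x s| |x (l * s)| ≤ Φ r₀ r₀ :=
        hΦmono _ _ _ _ (abs_nonneg _) (abs_nonneg _) (hxr s hs.1)
          (hxr _ (mul_nonneg hl.le hs.1))
      have tri : |u t s (x s) (x (l * s))| ≤
          |u t s 0 0| + |u t s (x s) (x (l * s)) - u t s 0 0| := by
        have := abs_add_le (u t s 0 0) (u t s (x s) (x (l * s)) - u t s 0 0)
        simpa using this
      have h3 : n t * Φ |x s| |x (l * s)| ≤ n t * Φ r₀ r₀ :=
        mul_le_mul_of_nonneg_left h2 hn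
      linarith [hustar_ub s hs]
    have hwc : ContinuousOn (fun s => u t s (x s) (x (l * s))) (Set.Icc 0 t) :=
      hW.comp (continuousOn_const.prodMk continuousOn_id) (fun s hs => ⟨ht', hs.1⟩)
    have hint : IntervalIntegrable
        (fun s => u t s (x s) (x (l * s)) * (t - s) ^ (α - 1)) MeasureTheory.volume 0 t :=
      (aux_ker_intble α hα t).continuousOn_mul (by rwa [Set.uIcc_of_le ht'])
    have habs_int : |∫ s in (0:ℝ)..t, u t s (x s) (x (l * s)) * (t - s) ^ (α - 1)| ≤
        (ustar t + n t * Φ r₀ r₀) * (t ^ α / α) := by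
      have h1 := intervalIntegral.abs_integral_le_integral_abs (μ := MeasureTheory.volume)
        (f := fun s => u t s (x s) (x (l * s)) * (t - s) ^ (α - 1)) ht'
      have h2 : (∫ s in (0:ℝ)..t, |u t s (x s) (x (l * s)) * (t - s) ^ (α - 1)|) ≤
          ∫ s in (0:ℝ)..t, (ustar t + n t * Φ r₀ r₀) * (t - s) ^ (α - 1) := by
        apply intervalIntegral.integral_mono_on ht' hint.abs
          ((aux_ker_intble α hα t).const_mul _)
        intro s hs
        rw [abs_mul, abs_of_nonneg (Real.rpow_nonneg (by linarith [hs.2]) _)]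
        exact mul_le_mul_of_nonneg_right (hK s hs)
          (Real.rpow_nonneg (by linarith [hs.2]) _)
      rw [intervalIntegral.integral_const_mul, aux_ker_integral α hα ht'] at h2
      linarith
    have hfb : |f t (x t)| ≤ m t * r₀ + |f t 0| := by
      have tri : |f t (x t)| ≤ |f t (x t) - f t 0| + |f t 0| := by
        have := abs_add_le (f t (x t) - f t 0) (f t 0)
        simpa using this
      have h1 := hLip t ht (x t) 0
      simp only [sub_zero] at h1
      have h2 : m t * |x t| ≤ m t * r₀ := mul_le_mul_of_nonneg_left (hxr t ht) hm
      linarith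
    have e1 : m t * n t * t ^ α ≤ φs := hφlub.1 ⟨t, ht, rfl⟩
    have e2 : m t * ustar t * t ^ α ≤ ψs := hψlub.1 ⟨t, ht, rfl⟩
    have e3 : n t * |f t 0| * t ^ α ≤ ξs := hξlub.1 ⟨t, ht, rfl⟩
    have e4 : ustar t * |f t 0| * t ^ α ≤ ηs := hηlub.1 ⟨t, ht, rfl⟩
    have htαnn : (0:ℝ) ≤ t ^ α := Real.rpow_nonneg ht' α
    have hMnn : 0 ≤ m t * r₀ + |f t 0| := by positivity
    have key : (m t * r₀ + |f t 0|) * ((ustar t + n t * Φ r₀ r₀) * t ^ α) ≤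
        φs * r₀ * Φ r₀ r₀ + ψs * r₀ + ξs * Φ r₀ r₀ + ηs := by
      nlinarith [mul_le_mul_of_nonneg_right e1 (mul_nonneg hr₀.le hΦrnn),
        mul_le_mul_of_nonneg_right e2 hr₀.le,
        mul_le_mul_of_nonneg_right e3 hΦrnn, e4,
        mul_nonneg hm htαnn, mul_nonneg hn htαnn, abs_nonneg (f t 0)]
    have step : |f t (x t) / Real.Gamma α *
        ∫ s in (0:ℝ)..t, u t s (x s) (x (l * s)) * (t - s) ^ (α - 1)| ≤
        (φs * r₀ * Φ r₀ r₀ + ψs * r₀ + ξs * Φ r₀ r₀ + ηs) / Real.Gamma (α + 1) := by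
      rw [abs_mul, abs_div, abs_of_pos hΓ]
      have m1 : |f t (x t)| *
          |∫ s in (0:ℝ)..t, u t s (x s) (x (l * s)) * (t - s) ^ (α - 1)| ≤
          (m t * r₀ + |f t 0|) * ((ustar t + n t * Φ r₀ r₀) * (t ^ α / α)) :=
        mul_le_mul hfb habs_int (abs_nonneg _) hMnn
      have e5 : (m t * r₀ + |f t 0|) * ((ustar t + n t * Φ r₀ r₀) * (t ^ α / α)) /
          Real.Gamma α =
          (m t * r₀ + |f t 0|) * ((ustar t + n t * Φ r₀ r₀) * t ^ α) /
          (α * Real.Gamma α) := by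
        field_simp
      calc |f t (x t)| / Real.Gamma α *
            |∫ s in (0:ℝ)..t, u t s (x s) (x (l * s)) * (t - s) ^ (α - 1)| =
          |f t (x t)| *
            |∫ s in (0:ℝ)..t, u t s (x s) (x (l * s)) * (t - s) ^ (α - 1)| /
            Real.Gamma α := by ring
        _ ≤ (m t * r₀ + |f t 0|) * ((ustar t + n t * Φ r₀ r₀) * (t ^ α / α)) /
            Real.Gamma α := by
            exact div_le_div_of_nonneg_right m1 hΓ.le
        _ = (m t * r₀ + |f t 0|) * ((ustar t + n t * Φ r₀ r₀) * t ^ α) /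
            (α * Real.Gamma α) := e5
        _ ≤ (φs * r₀ * Φ r₀ r₀ + ψs * r₀ + ξs * Φ r₀ r₀ + ηs) / (α * Real.Gamma α) := by
            exact div_le_div_of_nonneg_right key (by positivity)
        _ = (φs * r₀ * Φ r₀ r₀ + ψs * r₀ + ξs * Φ r₀ r₀ + ηs) / Real.Gamma (α + 1) := by
            rw [hΓ1]
    have hA1 : |a t| ≤ normA := hA.1 ⟨t, ht, rfl⟩
    have hfinal : normA +
        (φs * r₀ * Φ r₀ r₀ + ψs * r₀ + ξs * Φ r₀ r₀ + ηs) / Real.Gamma (α + 1) ≤ r₀ := by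
      have h2 : normA +
          (φs * r₀ * Φ r₀ r₀ + ψs * r₀ + ξs * Φ r₀ r₀ + ηs) / Real.Gamma (α + 1) =
          (normA * Real.Gamma (α + 1) +
            (φs * r₀ * Φ r₀ r₀ + ψs * r₀ + ξs * Φ r₀ r₀ + ηs)) / Real.Gamma (α + 1) := by
        field_simp
      rw [h2, div_le_iff₀ hΓ1pos]
      linarith
    calc |a t + f t (x t) / Real.Gamma α *
          ∫ s in (0:ℝ)..t, u t s (x s) (x (l * s)) * (t - s) ^ (α - 1)| ≤
        |a t| + |f t (x t) / Real.Gamma α *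
          ∫ s in (0:ℝ)..t, u t s (x s) (x (l * s)) * (t - s) ^ (α - 1)| := abs_add_le _ _
      _ ≤ normA +
          (φs * r₀ * Φ r₀ r₀ + ψs * r₀ + ξs * Φ r₀ r₀ + ηs) / Real.Gamma (α + 1) :=
          add_le_add hA1 step
      _ ≤ r₀ := hfinal
end

section
/- Under the hypotheses of the main theorem, for any x, y in the ball B_{r₀} of BC(ℝ≥0) and any t ≥ 0, |(Fx)(t) − (Fy)(t)| ≤ (1/Γ(α+1))·[(φ(t)Φ(r₀,r₀) + ψ(t))·|x(t) − y(t)| + Φ(2r₀,2r₀)·(φ(t)r₀ + ξ(t))]. Consequently diam (F X)(t) ≤ ((φ(t)Φ(r₀,r₀)+ψ(t))/Γ(α+1))·diam X(t) + (Φ(2r₀,2r₀)/Γ(α+1))·(φ(t)r₀ + ξ(t)) for every X ⊆ B_{r₀}. -/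
open Real intervalIntegral

lemma wInt (α t : ℝ) (hα : 0 < α) :
    IntervalIntegrable (fun s => (t - s) ^ (α - 1)) MeasureTheory.volume 0 t := by
  have h := (intervalIntegrable_rpow' (a := 0) (b := t) (by linarith : (-1:ℝ) < α - 1)).comp_sub_left t
  simpa using h.symm

lemma wVal (α t : ℝ) (hα : 0 < α) (ht : 0 ≤ t) :
    ∫ s in (0:ℝ)..t, (t - s) ^ (α - 1) = t ^ α / α := by
  rw [show (fun s => (t - s) ^ (α - 1)) = (fun s => ((fun z => z ^ (α - 1)) (t - s))) from rfl,
    intervalIntegral.integral_comp_sub_left (fun z => z ^ (α - 1)) t]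
  simp only [sub_self, sub_zero]
  rw [integral_rpow (Or.inl (by linarith))]
  rw [sub_add_cancel, Real.zero_rpow hα.ne']
  ring

lemma keybound (α t C : ℝ) (hα : 0 < α) (ht : 0 ≤ t) (hC : 0 ≤ C) (g : ℝ → ℝ)
    (hb : ∀ s ∈ Set.Ioc (0:ℝ) t, |g s| ≤ C) :
    |∫ s in (0:ℝ)..t, g s * (t - s) ^ (α - 1)| ≤ C * (t ^ α / α) := by
  have hInt : IntervalIntegrable (fun s => C * (t - s) ^ (α - 1)) MeasureTheory.volume 0 t :=
    (wInt α t hα).const_mul C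
  have hae : ∀ᵐ s ∂(MeasureTheory.volume.restrict (Set.uIoc (0:ℝ) t)),
      ‖g s * (t - s) ^ (α - 1)‖ ≤ C * (t - s) ^ (α - 1) := by
    filter_upwards [MeasureTheory.ae_restrict_mem measurableSet_uIoc] with s hs
    rw [Set.uIoc_of_le ht] at hs
    have hw : (0:ℝ) ≤ (t - s) ^ (α - 1) := Real.rpow_nonneg (by linarith [hs.2]) _
    rw [Real.norm_eq_abs, abs_mul, abs_of_nonneg hw]
    exact mul_le_mul_of_nonneg_right (hb s hs) hw
  have := intervalIntegral.norm_integral_le_abs_of_norm_le hae hInt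
  rw [Real.norm_eq_abs] at this
  refine this.trans ?_
  rw [intervalIntegral.integral_const_mul, wVal α t hα ht, abs_mul, abs_of_nonneg hC,
    abs_of_nonneg (by positivity)]

/-- Pointwise difference estimate for the operator `𝓕` on `B_{r₀}`, and the
resulting estimate for the diameter `diam (𝓕X)(t)`. -/
theorem stmt10
    (α l : ℝ) (hα : 0 < α) (hα1 : α < 1) (hl : 0 < l) (hl1 : l < 1)
    (a m n : ℝ → ℝ) (f : ℝ → ℝ → ℝ) (u : ℝ → ℝ → ℝ → ℝ → ℝ) (Φ : ℝ → ℝ → ℝ)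
    (ustar : ℝ → ℝ) (normA φs ψs ξs ηs r₀ : ℝ)
    -- (h₁) : a is continuous and bounded on ℝ≥0, with sup norm normA
    (ha : ContinuousOn a (Set.Ici 0))
    (hA : IsLUB ((fun t => |a t|) '' Set.Ici 0) normA)
    -- (h₂) : f is continuous and Lipschitz in its second variable with coefficient m
    (hf : ContinuousOn (fun p : ℝ × ℝ => f p.1 p.2) (Set.Ici 0 ×ˢ Set.univ))
    (hmc : ContinuousOn m (Set.Ici 0)) (hm0 : ∀ t ∈ Set.Ici (0:ℝ), 0 ≤ m t)
    (hLip : ∀ t ∈ Set.Ici (0:ℝ), ∀ x y : ℝ, |f t x - f t y| ≤ m t * |x - y|)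
    -- (h₃) : u is continuous with modulus of continuity n(t) Φ
    (hu : ContinuousOn (fun p : ℝ × ℝ × ℝ × ℝ => u p.1 p.2.1 p.2.2.1 p.2.2.2)
      (Set.Ici 0 ×ˢ Set.Ici 0 ×ˢ Set.univ ×ˢ Set.univ))
    (hnc : ContinuousOn n (Set.Ici 0)) (hn0 : ∀ t ∈ Set.Ici (0:ℝ), 0 ≤ n t)
    (hΦc : ContinuousOn (fun p : ℝ × ℝ => Φ p.1 p.2) (Set.Ici 0 ×ˢ Set.Ici 0))
    (hΦmono : ∀ p q p' q' : ℝ, 0 ≤ p → 0 ≤ q → p ≤ p' → q ≤ q' → Φ p q ≤ Φ p' q')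
    (hΦ0 : Φ 0 0 = 0)
    (hΦnn : ∀ p q : ℝ, 0 ≤ p → 0 ≤ q → 0 ≤ Φ p q)
    (humod : ∀ t s : ℝ, 0 ≤ s → s ≤ t → ∀ x₁ y₁ x₂ y₂ : ℝ,
      |u t s x₂ y₂ - u t s x₁ y₁| ≤ n t * Φ |x₂ - x₁| |y₂ - y₁|)
    -- u*(t) = max_{0 ≤ s ≤ t} |u(t,s,0,0)|
    (hustar : ∀ t ∈ Set.Ici (0:ℝ),
      IsGreatest ((fun s => |u t s 0 0|) '' Set.Icc 0 t) (ustar t))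
    -- (h₄) : φ, ψ, ξ, η are bounded with suprema φ*, ψ*, ξ*, η*, and φ, ξ → 0 at ∞
    (hφlub : IsLUB ((fun t => m t * n t * t ^ α) '' Set.Ici 0) φs)
    (hψlub : IsLUB ((fun t => m t * ustar t * t ^ α) '' Set.Ici 0) ψs)
    (hξlub : IsLUB ((fun t => n t * |f t 0| * t ^ α) '' Set.Ici 0) ξs)
    (hηlub : IsLUB ((fun t => ustar t * |f t 0| * t ^ α) '' Set.Ici 0) ηs)
    (hφ0 : Filter.Tendsto (fun t => m t * n t * t ^ α) Filter.atTop (nhds 0))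
    (hξ0 : Filter.Tendsto (fun t => n t * |f t 0| * t ^ α) Filter.atTop (nhds 0))
    -- (h₅)
    (hr₀ : 0 < r₀)
    (hineq : normA * Real.Gamma (α + 1) +
      (φs * r₀ * Φ r₀ r₀ + ψs * r₀ + ξs * Φ r₀ r₀ + ηs) ≤ r₀ * Real.Gamma (α + 1))
    (hk : φs * Φ r₀ r₀ + ψs < Real.Gamma (α + 1)) :
    (∀ x y : ℝ → ℝ, ContinuousOn x (Set.Ici 0) → ContinuousOn y (Set.Ici 0) →
      (∀ t ∈ Set.Ici (0:ℝ), |x t| ≤ r₀) → (∀ t ∈ Set.Ici (0:ℝ), |y t| ≤ r₀) →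
      ∀ t ∈ Set.Ici (0:ℝ),
        |(a t + (f t (x t) / Real.Gamma α) *
            ∫ s in (0:ℝ)..t, u t s (x s) (x (l * s)) * (t - s) ^ (α - 1)) -
         (a t + (f t (y t) / Real.Gamma α) *
            ∫ s in (0:ℝ)..t, u t s (y s) (y (l * s)) * (t - s) ^ (α - 1))| ≤
          (1 / Real.Gamma (α + 1)) *
            (((m t * n t * t ^ α) * Φ r₀ r₀ + m t * ustar t * t ^ α) * |x t - y t| +
              Φ (2 * r₀) (2 * r₀) * ((m t * n t * t ^ α) * r₀ + n t * |f t 0| * t ^ α))) ∧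
    (∀ X : Set (ℝ → ℝ),
      (∀ x ∈ X, ContinuousOn x (Set.Ici 0) ∧ ∀ t ∈ Set.Ici (0:ℝ), |x t| ≤ r₀) →
      ∀ t ∈ Set.Ici (0:ℝ),
        Metric.diam ((fun x : ℝ → ℝ => a t + (f t (x t) / Real.Gamma α) *
            ∫ s in (0:ℝ)..t, u t s (x s) (x (l * s)) * (t - s) ^ (α - 1)) '' X) ≤
          ((m t * n t * t ^ α) * Φ r₀ r₀ + m t * ustar t * t ^ α) / Real.Gamma (α + 1) *
            Metric.diam ((fun x : ℝ → ℝ => x t) '' X) +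
          Φ (2 * r₀) (2 * r₀) / Real.Gamma (α + 1) *
            ((m t * n t * t ^ α) * r₀ + n t * |f t 0| * t ^ α)) := by
  have hG : 0 < Real.Gamma α := Real.Gamma_pos_of_pos hα
  have hG' : 0 < Real.Gamma (α + 1) := Real.Gamma_pos_of_pos (by linarith)
  have hGam : Real.Gamma (α + 1) = α * Real.Gamma α := Real.Gamma_add_one hα.ne'
  set G := Real.Gamma α with hGdef
  have main : ∀ x y : ℝ → ℝ, ContinuousOn x (Set.Ici 0) → ContinuousOn y (Set.Ici 0) →
      (∀ t ∈ Set.Ici (0:ℝ), |x t| ≤ r₀) → (∀ t ∈ Set.Ici (0:ℝ), |y t| ≤ r₀) →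
      ∀ t ∈ Set.Ici (0:ℝ),
        |(a t + (f t (x t) / G) *
            ∫ s in (0:ℝ)..t, u t s (x s) (x (l * s)) * (t - s) ^ (α - 1)) -
         (a t + (f t (y t) / G) *
            ∫ s in (0:ℝ)..t, u t s (y s) (y (l * s)) * (t - s) ^ (α - 1))| ≤
          (1 / Real.Gamma (α + 1)) *
            (((m t * n t * t ^ α) * Φ r₀ r₀ + m t * ustar t * t ^ α) * |x t - y t| +
              Φ (2 * r₀) (2 * r₀) * ((m t * n t * t ^ α) * r₀ + n t * |f t 0| * t ^ α)) := by
    intro x y hx hy hxb hyb t ht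
    rw [Set.mem_Ici] at ht
    have hm := hm0 t ht
    have hn := hn0 t ht
    have htα : (0:ℝ) ≤ t ^ α := Real.rpow_nonneg ht α
    have hΦr : 0 ≤ Φ r₀ r₀ := hΦnn _ _ hr₀.le hr₀.le
    have hΦ2 : 0 ≤ Φ (2 * r₀) (2 * r₀) := hΦnn _ _ (by linarith) (by linarith)
    have hust : 0 ≤ ustar t := by
      obtain ⟨s, -, hs⟩ := (hustar t ht).1
      rw [← hs]; exact abs_nonneg _
    -- continuity of the integrands
    have hcont : ∀ z : ℝ → ℝ, ContinuousOn z (Set.Ici 0) →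
        ContinuousOn (fun s => u t s (z s) (z (l * s))) (Set.Icc 0 t) := by
      intro z hz
      have h1 : ContinuousOn (fun s : ℝ => ((t, s, z s, z (l * s)) : ℝ × ℝ × ℝ × ℝ))
          (Set.Icc 0 t) := by
        refine continuousOn_const.prodMk (continuousOn_id.prodMk ((hz.mono Set.Icc_subset_Ici_self).prodMk ?_))
        exact hz.comp ((continuous_const.mul continuous_id).continuousOn)
          (fun s hs => mul_nonneg hl.le hs.1)
      exact hu.comp h1 (fun s hs => ⟨ht, hs.1, trivial, trivial⟩)
    have hIntx : IntervalIntegrable (fun s => u t s (x s) (x (l * s)) * (t - s) ^ (α - 1))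
        MeasureTheory.volume 0 t :=
      (wInt α t hα).continuousOn_mul (by rw [Set.uIcc_of_le ht]; exact hcont x hx)
    have hInty : IntervalIntegrable (fun s => u t s (y s) (y (l * s)) * (t - s) ^ (α - 1))
        MeasureTheory.volume 0 t :=
      (wInt α t hα).continuousOn_mul (by rw [Set.uIcc_of_le ht]; exact hcont y hy)
    set Ix := ∫ s in (0:ℝ)..t, u t s (x s) (x (l * s)) * (t - s) ^ (α - 1) with hIxdef
    set Iy := ∫ s in (0:ℝ)..t, u t s (y s) (y (l * s)) * (t - s) ^ (α - 1) with hIydef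
    -- bound on Ix
    have hC1 : 0 ≤ n t * Φ r₀ r₀ + ustar t := by positivity
    have hIxb : |Ix| ≤ (n t * Φ r₀ r₀ + ustar t) * (t ^ α / α) := by
      refine keybound α t _ hα ht hC1 _ (fun s hs => ?_)
      have hs0 : 0 ≤ s := hs.1.le
      have huu : |u t s (x s) (x (l * s)) - u t s 0 0| ≤ n t * Φ r₀ r₀ := by
        refine (humod t s hs0 hs.2 0 0 _ _).trans ?_
        refine mul_le_mul_of_nonneg_left ?_ hn
        simp only [sub_zero]
        exact hΦmono _ _ _ _ (abs_nonneg _) (abs_nonneg _) (hxb s hs0)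
          (hxb (l * s) (mul_nonneg hl.le hs0))
      have hu0 : |u t s 0 0| ≤ ustar t :=
        (hustar t ht).2 (Set.mem_image_of_mem _ ⟨hs0, hs.2⟩)
      calc |u t s (x s) (x (l * s))|
          = |(u t s (x s) (x (l * s)) - u t s 0 0) + u t s 0 0| := by ring_nf
        _ ≤ |u t s (x s) (x (l * s)) - u t s 0 0| + |u t s 0 0| := abs_add_le _ _
        _ ≤ n t * Φ r₀ r₀ + ustar t := add_le_add huu hu0
    -- bound on Ix - Iy
    have hJ : Ix - Iy = ∫ s in (0:ℝ)..t,
        (u t s (x s) (x (l * s)) - u t s (y s) (y (l * s))) * (t - s) ^ (α - 1) := by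
      rw [hIxdef, hIydef, ← intervalIntegral.integral_sub hIntx hInty]
      congr 1; funext s; ring
    have hC2 : 0 ≤ n t * Φ (2 * r₀) (2 * r₀) := by positivity
    have hJb : |Ix - Iy| ≤ (n t * Φ (2 * r₀) (2 * r₀)) * (t ^ α / α) := by
      rw [hJ]
      refine keybound α t _ hα ht hC2 _ (fun s hs => ?_)
      have hs0 : 0 ≤ s := hs.1.le
      refine (humod t s hs0 hs.2 _ _ _ _).trans ?_
      refine mul_le_mul_of_nonneg_left ?_ hn
      have h2 : ∀ p q : ℝ, |p| ≤ r₀ → |q| ≤ r₀ → |p - q| ≤ 2 * r₀ := by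
        intro p q hp hq
        calc |p - q| ≤ |p| + |q| := by
              simpa [sub_eq_add_neg] using abs_add_le p (-q)
          _ ≤ 2 * r₀ := by linarith
      exact hΦmono _ _ _ _ (abs_nonneg _) (abs_nonneg _)
        (h2 _ _ (hxb s hs0) (hyb s hs0))
        (h2 _ _ (hxb (l * s) (mul_nonneg hl.le hs0)) (hyb (l * s) (mul_nonneg hl.le hs0)))
    -- bounds on f
    have hd : |f t (x t) - f t (y t)| ≤ m t * |x t - y t| := hLip t ht _ _
    have hfy : |f t (y t)| ≤ m t * r₀ + |f t 0| := by
      have h1 : |f t (y t) - f t 0| ≤ m t * |y t - 0| := hLip t ht _ _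
      rw [sub_zero] at h1
      calc |f t (y t)| = |(f t (y t) - f t 0) + f t 0| := by ring_nf
        _ ≤ |f t (y t) - f t 0| + |f t 0| := abs_add_le _ _
        _ ≤ m t * |y t| + |f t 0| := by linarith
        _ ≤ m t * r₀ + |f t 0| := by
            have := mul_le_mul_of_nonneg_left (hyb t ht) hm; linarith
    -- the splitting
    have hsplit : (a t + (f t (x t) / G) * Ix) - (a t + (f t (y t) / G) * Iy) =
        (f t (x t) - f t (y t)) / G * Ix + f t (y t) / G * (Ix - Iy) := by ring
    have hA1 : |(f t (x t) - f t (y t)) / G * Ix| ≤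
        (m t * |x t - y t|) / G * ((n t * Φ r₀ r₀ + ustar t) * (t ^ α / α)) := by
      rw [abs_mul, abs_div, abs_of_pos hG]
      exact mul_le_mul (by gcongr) hIxb (abs_nonneg _)
        (div_nonneg (mul_nonneg hm (abs_nonneg _)) hG.le)
    have hB1 : |f t (y t) / G * (Ix - Iy)| ≤
        (m t * r₀ + |f t 0|) / G * ((n t * Φ (2 * r₀) (2 * r₀)) * (t ^ α / α)) := by
      rw [abs_mul, abs_div, abs_of_pos hG]
      exact mul_le_mul (by gcongr) hJb (abs_nonneg _)
        (div_nonneg (by positivity) hG.le)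
    have hfin : (m t * |x t - y t|) / G * ((n t * Φ r₀ r₀ + ustar t) * (t ^ α / α)) +
        (m t * r₀ + |f t 0|) / G * ((n t * Φ (2 * r₀) (2 * r₀)) * (t ^ α / α)) =
        (1 / Real.Gamma (α + 1)) *
            (((m t * n t * t ^ α) * Φ r₀ r₀ + m t * ustar t * t ^ α) * |x t - y t| +
              Φ (2 * r₀) (2 * r₀) * ((m t * n t * t ^ α) * r₀ + n t * |f t 0| * t ^ α)) := by
      rw [hGam]
      field_simp
    calc |(a t + (f t (x t) / G) * Ix) - (a t + (f t (y t) / G) * Iy)|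
        = |(f t (x t) - f t (y t)) / G * Ix + f t (y t) / G * (Ix - Iy)| := by rw [hsplit]
      _ ≤ |(f t (x t) - f t (y t)) / G * Ix| + |f t (y t) / G * (Ix - Iy)| := abs_add_le _ _
      _ ≤ _ := add_le_add hA1 hB1
      _ = _ := hfin
  refine ⟨main, ?_⟩
  intro X hX t ht
  have htt := ht; rw [Set.mem_Ici] at htt
  have hm := hm0 t ht
  have hn := hn0 t ht
  have htα : (0:ℝ) ≤ t ^ α := Real.rpow_nonneg htt α
  have hΦr : 0 ≤ Φ r₀ r₀ := hΦnn _ _ hr₀.le hr₀.le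
  have hΦ2 : 0 ≤ Φ (2 * r₀) (2 * r₀) := hΦnn _ _ (by linarith) (by linarith)
  have hust : 0 ≤ ustar t := by
    obtain ⟨s, -, hs⟩ := (hustar t ht).1
    rw [← hs]; exact abs_nonneg _
  set K := (m t * n t * t ^ α) * Φ r₀ r₀ + m t * ustar t * t ^ α with hKdef
  set E := (m t * n t * t ^ α) * r₀ + n t * |f t 0| * t ^ α with hEdef
  have hK : 0 ≤ K := by positivity
  have hE : 0 ≤ E := by positivity
  set d := Metric.diam ((fun x : ℝ → ℝ => x t) '' X) with hddef
  have hd0 : 0 ≤ d := Metric.diam_nonneg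
  have hbnd : Bornology.IsBounded ((fun x : ℝ → ℝ => x t) '' X) := by
    refine (Metric.isBounded_Icc (-r₀) r₀).subset ?_
    rintro _ ⟨x, hxX, rfl⟩
    exact abs_le.mp ((hX x hxX).2 t ht)
  refine Metric.diam_le_of_forall_dist_le (by positivity) ?_
  rintro _ ⟨x, hxX, rfl⟩ _ ⟨y, hyX, rfl⟩
  rw [Real.dist_eq]
  have hdist : |x t - y t| ≤ d := by
    rw [← Real.dist_eq]
    exact Metric.dist_le_diam_of_mem hbnd (Set.mem_image_of_mem _ hxX)
      (Set.mem_image_of_mem _ hyX)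
  calc |(a t + (f t (x t) / G) *
            ∫ s in (0:ℝ)..t, u t s (x s) (x (l * s)) * (t - s) ^ (α - 1)) -
         (a t + (f t (y t) / G) *
            ∫ s in (0:ℝ)..t, u t s (y s) (y (l * s)) * (t - s) ^ (α - 1))|
      ≤ (1 / Real.Gamma (α + 1)) * (K * |x t - y t| + Φ (2 * r₀) (2 * r₀) * E) :=
        main x y (hX x hxX).1 (hX y hyX).1 (hX x hxX).2 (hX y hyX).2 t ht
    _ ≤ (1 / Real.Gamma (α + 1)) * (K * d + Φ (2 * r₀) (2 * r₀) * E) := by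
        refine mul_le_mul_of_nonneg_left ?_ (by positivity)
        exact add_le_add_left (mul_le_mul_of_nonneg_left hdist hK) _
    _ = K / Real.Gamma (α + 1) * d + Φ (2 * r₀) (2 * r₀) / Real.Gamma (α + 1) * E := by
        ring
end

section
/- Under the hypotheses of the main theorem, if additionally Φ(s,s) → 0 as s → 0⁺ and lim_{t→∞} φ(t) = lim_{t→∞} ξ(t) = 0, then the quantity c(FX) := limsup_{t→∞} diam (FX)(t) satisfies c(FX) ≤ k·c(X) for every nonempty X ⊆ B_{r₀}, where k = (φ*Φ(r₀,r₀) + ψ*)/Γ(α+1), and k < 1. -/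
open Real intervalIntegral Filter

lemma keylem {α t : ℝ} (hα : 0 < α) (ht : 0 < t) {g : ℝ → ℝ} {C : ℝ}
    (hg : ContinuousOn g (Set.Icc 0 t)) (hC : ∀ s ∈ Set.Icc 0 t, |g s| ≤ C) :
    IntervalIntegrable (fun s => g s * (t - s) ^ (α - 1)) MeasureTheory.volume 0 t ∧
    |∫ s in (0:ℝ)..t, g s * (t - s) ^ (α - 1)| ≤ C * (t ^ α / α) := by
  have huIcc : Set.uIcc (0:ℝ) t = Set.Icc 0 t := Set.uIcc_of_le ht.le
  have h1 : IntervalIntegrable (fun s : ℝ => s ^ (α - 1)) MeasureTheory.volume (t - 0) (t - t) :=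
    (intervalIntegrable_rpow' (by linarith)).symm
  have hw : IntervalIntegrable (fun s : ℝ => (t - s) ^ (α - 1)) MeasureTheory.volume 0 t := by
    simpa using h1.comp_sub_left t
  have hint : IntervalIntegrable (fun s => g s * (t - s) ^ (α - 1)) MeasureTheory.volume 0 t :=
    hw.continuousOn_mul (huIcc ▸ hg)
  refine ⟨hint, ?_⟩
  have hJ : (∫ s in (0:ℝ)..t, (t - s) ^ (α - 1)) = t ^ α / α := by
    rw [intervalIntegral.integral_comp_sub_left (fun s : ℝ => s ^ (α - 1)) t]
    simp only [sub_self, sub_zero]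
    rw [integral_rpow (Or.inl (by linarith))]
    rw [Real.zero_rpow (by linarith : α - 1 + 1 ≠ 0)]
    ring_nf
  calc |∫ s in (0:ℝ)..t, g s * (t - s) ^ (α - 1)|
      ≤ ∫ s in (0:ℝ)..t, |g s * (t - s) ^ (α - 1)| :=
        intervalIntegral.abs_integral_le_integral_abs ht.le
    _ ≤ ∫ s in (0:ℝ)..t, C * (t - s) ^ (α - 1) := by
        apply intervalIntegral.integral_mono_on ht.le hint.abs (hw.const_mul C)
        intro s hs
        have hp : (0:ℝ) ≤ (t - s) ^ (α - 1) := Real.rpow_nonneg (by linarith [hs.2]) _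
        rw [abs_mul, abs_of_nonneg hp]
        exact mul_le_mul_of_nonneg_right (hC s hs) hp
    _ = C * (t ^ α / α) := by rw [intervalIntegral.integral_const_mul, hJ]

/-- The estimate `c(𝓕X) ≤ k c(X)` with `k = (φ*Φ(r₀,r₀)+ψ*)/Γ(α+1) < 1`. -/
theorem stmt11
    (α l : ℝ) (hα : 0 < α) (hα1 : α < 1) (hl : 0 < l) (hl1 : l < 1)
    (a m n : ℝ → ℝ) (f : ℝ → ℝ → ℝ) (u : ℝ → ℝ → ℝ → ℝ → ℝ) (Φ : ℝ → ℝ → ℝ)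
    (ustar : ℝ → ℝ) (normA φs ψs ξs ηs r₀ : ℝ)
    -- (h₁) : a is continuous and bounded on ℝ≥0, with sup norm normA
    (ha : ContinuousOn a (Set.Ici 0))
    (hA : IsLUB ((fun t => |a t|) '' Set.Ici 0) normA)
    -- (h₂) : f is continuous and Lipschitz in its second variable with coefficient m
    (hf : ContinuousOn (fun p : ℝ × ℝ => f p.1 p.2) (Set.Ici 0 ×ˢ Set.univ))
    (hmc : ContinuousOn m (Set.Ici 0)) (hm0 : ∀ t ∈ Set.Ici (0:ℝ), 0 ≤ m t)
    (hLip : ∀ t ∈ Set.Ici (0:ℝ), ∀ x y : ℝ, |f t x - f t y| ≤ m t * |x - y|)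
    -- (h₃) : u is continuous with modulus of continuity n(t) Φ
    (hu : ContinuousOn (fun p : ℝ × ℝ × ℝ × ℝ => u p.1 p.2.1 p.2.2.1 p.2.2.2)
      (Set.Ici 0 ×ˢ Set.Ici 0 ×ˢ Set.univ ×ˢ Set.univ))
    (hnc : ContinuousOn n (Set.Ici 0)) (hn0 : ∀ t ∈ Set.Ici (0:ℝ), 0 ≤ n t)
    (hΦc : ContinuousOn (fun p : ℝ × ℝ => Φ p.1 p.2) (Set.Ici 0 ×ˢ Set.Ici 0))
    (hΦmono : ∀ p q p' q' : ℝ, 0 ≤ p → 0 ≤ q → p ≤ p' → q ≤ q' → Φ p q ≤ Φ p' q')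
    (hΦ0 : Φ 0 0 = 0)
    (hΦnn : ∀ p q : ℝ, 0 ≤ p → 0 ≤ q → 0 ≤ Φ p q)
    (humod : ∀ t s : ℝ, 0 ≤ s → s ≤ t → ∀ x₁ y₁ x₂ y₂ : ℝ,
      |u t s x₂ y₂ - u t s x₁ y₁| ≤ n t * Φ |x₂ - x₁| |y₂ - y₁|)
    -- u*(t) = max_{0 ≤ s ≤ t} |u(t,s,0,0)|
    (hustar : ∀ t ∈ Set.Ici (0:ℝ),
      IsGreatest ((fun s => |u t s 0 0|) '' Set.Icc 0 t) (ustar t))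
    -- (h₄) : φ, ψ, ξ, η are bounded with suprema φ*, ψ*, ξ*, η*, and φ, ξ → 0 at ∞
    (hφlub : IsLUB ((fun t => m t * n t * t ^ α) '' Set.Ici 0) φs)
    (hψlub : IsLUB ((fun t => m t * ustar t * t ^ α) '' Set.Ici 0) ψs)
    (hξlub : IsLUB ((fun t => n t * |f t 0| * t ^ α) '' Set.Ici 0) ξs)
    (hηlub : IsLUB ((fun t => ustar t * |f t 0| * t ^ α) '' Set.Ici 0) ηs)
    (hφ0 : Filter.Tendsto (fun t => m t * n t * t ^ α) Filter.atTop (nhds 0))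
    (hξ0 : Filter.Tendsto (fun t => n t * |f t 0| * t ^ α) Filter.atTop (nhds 0))
    -- (h₅)
    (hr₀ : 0 < r₀)
    (hineq : normA * Real.Gamma (α + 1) +
      (φs * r₀ * Φ r₀ r₀ + ψs * r₀ + ξs * Φ r₀ r₀ + ηs) ≤ r₀ * Real.Gamma (α + 1))
    (hk : φs * Φ r₀ r₀ + ψs < Real.Gamma (α + 1))
    -- additional assumptions: Φ(s,s) → 0 as s → 0⁺ (φ, ξ → 0 at ∞ is hφ0, hξ0)
    (hΦlim : Tendsto (fun s => Φ s s) (nhdsWithin 0 (Set.Ioi 0)) (nhds 0))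
    (X : Set (ℝ → ℝ)) (hXne : X.Nonempty)
    (hXsub : ∀ x ∈ X, ContinuousOn x (Set.Ici 0) ∧ ∀ t ∈ Set.Ici (0:ℝ), |x t| ≤ r₀) :
    Filter.limsup
        (fun t : ℝ => Metric.diam ((fun x : ℝ → ℝ => a t + (f t (x t) / Real.Gamma α) *
          ∫ s in (0:ℝ)..t, u t s (x s) (x (l * s)) * (t - s) ^ (α - 1)) '' X))
        Filter.atTop ≤
      (φs * Φ r₀ r₀ + ψs) / Real.Gamma (α + 1) *
        Filter.limsup (fun t : ℝ => Metric.diam ((fun x : ℝ → ℝ => x t) '' X))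
          Filter.atTop ∧
    (φs * Φ r₀ r₀ + ψs) / Real.Gamma (α + 1) < 1 := by
  have hΓa : 0 < Real.Gamma α := Real.Gamma_pos_of_pos hα
  have hΓa1 : 0 < Real.Gamma (α + 1) := Real.Gamma_pos_of_pos (by linarith)
  have hΓrel : Real.Gamma (α + 1) = α * Real.Gamma α := Real.Gamma_add_one (ne_of_gt hα)
  set k : ℝ := (φs * Φ r₀ r₀ + ψs) / Real.Gamma (α + 1) with hkdef
  have hφs0 : 0 ≤ φs := hφlub.1 ⟨0, Set.self_mem_Ici, by simp [Real.zero_rpow (ne_of_gt hα)]⟩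
  have hψs0 : 0 ≤ ψs := hψlub.1 ⟨0, Set.self_mem_Ici, by simp [Real.zero_rpow (ne_of_gt hα)]⟩
  have hΦr : 0 ≤ Φ r₀ r₀ := hΦnn _ _ hr₀.le hr₀.le
  have hΦ2 : 0 ≤ Φ (2 * r₀) (2 * r₀) := hΦnn _ _ (by linarith) (by linarith)
  have hk0 : 0 ≤ k := div_nonneg (add_nonneg (mul_nonneg hφs0 hΦr) hψs0) hΓa1.le
  refine ⟨?_, (div_lt_one hΓa1).mpr hk⟩
  set d : ℝ → ℝ := fun t => Metric.diam ((fun x : ℝ → ℝ => x t) '' X) with hd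
  set E : ℝ → ℝ := fun t =>
    (r₀ * (m t * n t * t ^ α) + n t * |f t 0| * t ^ α) * Φ (2 * r₀) (2 * r₀) /
      Real.Gamma (α + 1) with hEdef
  have hElim : Tendsto E atTop (nhds 0) := by
    have h0 : Tendsto (fun t => r₀ * (m t * n t * t ^ α) + n t * |f t 0| * t ^ α)
        atTop (nhds 0) := by
      simpa using (hφ0.const_mul r₀).add hξ0
    simpa using (h0.mul_const (Φ (2 * r₀) (2 * r₀))).div_const (Real.Gamma (α + 1))
  -- pointwise estimate
  have hpoint : ∀ t : ℝ, 0 < t →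
      Metric.diam ((fun x : ℝ → ℝ => a t + (f t (x t) / Real.Gamma α) *
          ∫ s in (0:ℝ)..t, u t s (x s) (x (l * s)) * (t - s) ^ (α - 1)) '' X)
        ≤ k * d t + E t := by
    intro t ht
    have hmt : 0 ≤ m t := hm0 t ht.le
    have hnt : 0 ≤ n t := hn0 t ht.le
    have htα : 0 ≤ t ^ α := Real.rpow_nonneg ht.le α
    have hust : 0 ≤ ustar t := by
      obtain ⟨s, _, hse⟩ := (hustar t ht.le).1
      rw [← hse]; exact abs_nonneg _
    have hdnn : 0 ≤ d t := Metric.diam_nonneg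
    have hE0 : 0 ≤ E t := by
      apply div_nonneg _ hΓa1.le
      apply mul_nonneg _ hΦ2
      have := abs_nonneg (f t 0)
      positivity
    -- continuity + bound for the kernel composed with a member function
    have hcu : ∀ z : ℝ → ℝ, ContinuousOn z (Set.Ici 0) → (∀ s ∈ Set.Ici (0:ℝ), |z s| ≤ r₀) →
        ContinuousOn (fun s => u t s (z s) (z (l * s))) (Set.Icc 0 t) ∧
        ∀ s ∈ Set.Icc 0 t, |u t s (z s) (z (l * s))| ≤ ustar t + n t * Φ r₀ r₀ := by
      intro z hzc hzb
      have hls : ContinuousOn (fun s => z (l * s)) (Set.Icc 0 t) :=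
        hzc.comp (continuous_const.mul continuous_id).continuousOn
          (fun s hs => mul_nonneg hl.le hs.1)
      have hzc' : ContinuousOn z (Set.Icc 0 t) := hzc.mono (fun s hs => hs.1)
      have hpair : ContinuousOn (fun s => ((t, s, z s, z (l * s)) : ℝ × ℝ × ℝ × ℝ))
          (Set.Icc 0 t) := continuousOn_const.prodMk (continuousOn_id.prodMk (hzc'.prodMk hls))
      constructor
      · exact hu.comp hpair (fun s hs => ⟨ht.le, hs.1, trivial, trivial⟩)
      · intro s hs
        have h0 : |u t s 0 0| ≤ ustar t := (hustar t ht.le).2 ⟨s, hs, rfl⟩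
        have h1 := humod t s hs.1 hs.2 0 0 (z s) (z (l * s))
        have h2 : Φ |z s - 0| |z (l * s) - 0| ≤ Φ r₀ r₀ := by
          simp only [sub_zero]
          exact hΦmono _ _ _ _ (abs_nonneg _) (abs_nonneg _) (hzb s hs.1)
            (hzb _ (mul_nonneg hl.le hs.1))
        calc |u t s (z s) (z (l * s))|
            = |u t s 0 0 + (u t s (z s) (z (l * s)) - u t s 0 0)| := by ring_nf
          _ ≤ |u t s 0 0| + |u t s (z s) (z (l * s)) - u t s 0 0| := abs_add_le _ _
          _ ≤ ustar t + n t * Φ r₀ r₀ :=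
              add_le_add h0 (h1.trans (mul_le_mul_of_nonneg_left h2 hnt))
    have hB0 : 0 ≤ k * d t + E t := add_nonneg (mul_nonneg hk0 hdnn) hE0
    apply Metric.diam_le_of_forall_dist_le hB0
    rintro _ ⟨x, hxX, rfl⟩ _ ⟨y, hyX, rfl⟩
    obtain ⟨hxc, hxb⟩ := hXsub x hxX
    obtain ⟨hyc, hyb⟩ := hXsub y hyX
    obtain ⟨hxcu, hxub⟩ := hcu x hxc hxb
    obtain ⟨hycu, hyub⟩ := hcu y hyc hyb
    obtain ⟨hIx_int, hIx⟩ := keylem hα ht hxcu hxub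
    obtain ⟨hIy_int, hIy⟩ := keylem hα ht hycu hyub
    set Ix := ∫ s in (0:ℝ)..t, u t s (x s) (x (l * s)) * (t - s) ^ (α - 1) with hIxdef
    set Iy := ∫ s in (0:ℝ)..t, u t s (y s) (y (l * s)) * (t - s) ^ (α - 1) with hIydef
    have hsubc : ContinuousOn (fun s => u t s (x s) (x (l * s)) - u t s (y s) (y (l * s)))
        (Set.Icc 0 t) := hxcu.sub hycu
    have hsubb : ∀ s ∈ Set.Icc 0 t,
        |u t s (x s) (x (l * s)) - u t s (y s) (y (l * s))| ≤ n t * Φ (2 * r₀) (2 * r₀) := by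
      intro s hs
      have h1 := humod t s hs.1 hs.2 (y s) (y (l * s)) (x s) (x (l * s))
      refine h1.trans (mul_le_mul_of_nonneg_left ?_ hnt)
      apply hΦmono _ _ _ _ (abs_nonneg _) (abs_nonneg _)
      · calc |x s - y s| ≤ |x s| + |y s| := abs_sub _ _
          _ ≤ r₀ + r₀ := add_le_add (hxb s hs.1) (hyb s hs.1)
          _ = 2 * r₀ := by ring
      · have hls : l * s ∈ Set.Ici (0:ℝ) := mul_nonneg hl.le hs.1
        calc |x (l * s) - y (l * s)| ≤ |x (l * s)| + |y (l * s)| := abs_sub _ _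
          _ ≤ r₀ + r₀ := add_le_add (hxb _ hls) (hyb _ hls)
          _ = 2 * r₀ := by ring
    obtain ⟨hdint, hIdiff⟩ := keylem hα ht hsubc hsubb
    have hIeq : Ix - Iy = ∫ s in (0:ℝ)..t,
        (u t s (x s) (x (l * s)) - u t s (y s) (y (l * s))) * (t - s) ^ (α - 1) := by
      rw [hIxdef, hIydef, ← intervalIntegral.integral_sub hIx_int hIy_int]
      congr 1; funext s; ring
    have hIdiff' : |Ix - Iy| ≤ n t * Φ (2 * r₀) (2 * r₀) * (t ^ α / α) := by
      rw [hIeq]; exact hIdiff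
    -- Lipschitz bounds
    have hxyd : |x t - y t| ≤ d t := by
      have hbdd : Bornology.IsBounded ((fun x : ℝ → ℝ => x t) '' X) := by
        apply (Metric.isBounded_Icc (-r₀) r₀).subset
        rintro _ ⟨z, hz, rfl⟩
        exact abs_le.mp ((hXsub z hz).2 t ht.le)
      have := Metric.dist_le_diam_of_mem hbdd ⟨x, hxX, rfl⟩ ⟨y, hyX, rfl⟩
      rwa [Real.dist_eq] at this
    have hfx : |f t (x t) - f t (y t)| ≤ m t * d t :=
      (hLip t ht.le _ _).trans (mul_le_mul_of_nonneg_left hxyd hmt)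
    have hfy : |f t (y t)| ≤ m t * r₀ + |f t 0| := by
      have h1 := hLip t ht.le (y t) 0
      have h2 : |y t - 0| ≤ r₀ := by simpa using hyb t ht.le
      calc |f t (y t)| = |(f t (y t) - f t 0) + f t 0| := by ring_nf
        _ ≤ |f t (y t) - f t 0| + |f t 0| := abs_add_le _ _
        _ ≤ m t * r₀ + |f t 0| :=
            add_le_add (h1.trans (mul_le_mul_of_nonneg_left h2 hmt)) le_rfl
    rw [Real.dist_eq]
    have hid : (a t + f t (x t) / Real.Gamma α * Ix) - (a t + f t (y t) / Real.Gamma α * Iy)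
        = (f t (x t) - f t (y t)) * Ix / Real.Gamma α
          + f t (y t) * (Ix - Iy) / Real.Gamma α := by
      field_simp; ring
    calc |(a t + f t (x t) / Real.Gamma α * Ix) - (a t + f t (y t) / Real.Gamma α * Iy)|
        = |(f t (x t) - f t (y t)) * Ix / Real.Gamma α
            + f t (y t) * (Ix - Iy) / Real.Gamma α| := by rw [hid]
      _ ≤ |(f t (x t) - f t (y t)) * Ix / Real.Gamma α|
            + |f t (y t) * (Ix - Iy) / Real.Gamma α| := abs_add_le _ _
      _ = |f t (x t) - f t (y t)| * |Ix| / Real.Gamma α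
            + |f t (y t)| * |Ix - Iy| / Real.Gamma α := by
          rw [abs_div, abs_mul, abs_div, abs_mul, abs_of_pos hΓa]
      _ ≤ (m t * d t) * ((ustar t + n t * Φ r₀ r₀) * (t ^ α / α)) / Real.Gamma α
            + (m t * r₀ + |f t 0|) * (n t * Φ (2 * r₀) (2 * r₀) * (t ^ α / α)) /
              Real.Gamma α := by
          apply add_le_add
          · apply div_le_div_of_nonneg_right ?_ hΓa.le
            exact mul_le_mul hfx hIx (abs_nonneg _) (mul_nonneg hmt hdnn)
          · apply div_le_div_of_nonneg_right ?_ hΓa.le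
            exact mul_le_mul hfy hIdiff' (abs_nonneg _)
              (add_nonneg (mul_nonneg hmt hr₀.le) (abs_nonneg _))
      _ = ((m t * ustar t * t ^ α) * d t + (m t * n t * t ^ α) * Φ r₀ r₀ * d t) /
              Real.Gamma (α + 1) + E t := by
          rw [hEdef, hΓrel]
          field_simp
      _ ≤ (ψs * d t + φs * Φ r₀ r₀ * d t) / Real.Gamma (α + 1) + E t := by
          have h1 : m t * ustar t * t ^ α ≤ ψs := hψlub.1 ⟨t, ht.le, rfl⟩
          have h2 : m t * n t * t ^ α ≤ φs := hφlub.1 ⟨t, ht.le, rfl⟩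
          apply add_le_add _ le_rfl
          apply div_le_div_of_nonneg_right ?_ hΓa1.le
          exact add_le_add (mul_le_mul_of_nonneg_right h1 hdnn)
            (mul_le_mul_of_nonneg_right (mul_le_mul_of_nonneg_right h2 hΦr) hdnn)
      _ = k * d t + E t := by rw [hkdef]; field_simp; ring
  -- limsup argument
  have hGnn : ∀ t : ℝ, (0:ℝ) ≤ Metric.diam ((fun x : ℝ → ℝ => a t +
      (f t (x t) / Real.Gamma α) *
      ∫ s in (0:ℝ)..t, u t s (x s) (x (l * s)) * (t - s) ^ (α - 1)) '' X) :=
    fun t => Metric.diam_nonneg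
  refine le_of_forall_pos_le_add fun ε hε => ?_
  have hk1 : (0:ℝ) < k + 1 := by linarith
  set ε' : ℝ := ε / (k + 1) with hε'def
  have hε'0 : 0 < ε' := div_pos hε hk1
  have hdle : ∀ᶠ t in atTop, d t ≤ 2 * r₀ := by
    filter_upwards [eventually_ge_atTop (0:ℝ)] with t ht
    apply Metric.diam_le_of_forall_dist_le (by linarith)
    rintro _ ⟨x, hx, rfl⟩ _ ⟨y, hy, rfl⟩
    rw [Real.dist_eq]
    calc |x t - y t| ≤ |x t| + |y t| := abs_sub _ _
      _ ≤ r₀ + r₀ := add_le_add ((hXsub x hx).2 t ht) ((hXsub y hy).2 t ht)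
      _ = 2 * r₀ := by ring
  have hbdd : IsBoundedUnder (· ≤ ·) atTop d := ⟨2 * r₀, by rwa [Filter.eventually_map]⟩
  have h1 : ∀ᶠ t in atTop, d t < limsup d atTop + ε' :=
    eventually_lt_of_limsup_lt (by linarith) hbdd
  have h2 : ∀ᶠ t in atTop, E t < ε' := hElim.eventually_lt_const hε'0
  have h4 : ∀ᶠ t in atTop, Metric.diam ((fun x : ℝ → ℝ => a t +
      (f t (x t) / Real.Gamma α) *
      ∫ s in (0:ℝ)..t, u t s (x s) (x (l * s)) * (t - s) ^ (α - 1)) '' X)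
      ≤ k * limsup d atTop + ε := by
    filter_upwards [h1, h2, eventually_gt_atTop (0:ℝ)] with t ha hb hc
    have hεeq : (k + 1) * ε' = ε := by
      rw [hε'def]; field_simp
    calc Metric.diam _ ≤ k * d t + E t := hpoint t hc
      _ ≤ k * (limsup d atTop + ε') + ε' :=
          add_le_add (mul_le_mul_of_nonneg_left ha.le hk0) hb.le
      _ = k * limsup d atTop + (k + 1) * ε' := by ring
      _ = k * limsup d atTop + ε := by rw [hεeq]
  exact limsup_le_of_le (isCoboundedUnder_le_of_le atTop fun t => hGnn t) h4
end

section
/- Let α ∈ (0,1) and T > 0. Suppose g : [0,∞) × [0,∞) → ℝ is continuous, and for d > 0 define ω_d(ε) = sup{|g(t₂,s) − g(t₁,s)| : s, t₁, t₂ ∈ [0,T], t₁ ≥ s, t₂ ≥ s, |t₂ − t₁| ≤ ε}. Then for all t₁ ≤ t₂ in [0,T] with t₂ − t₁ ≤ ε, |(1/Γ(α)) ∫₀^{t₂} g(t₂,s)(t₂−s)^{α−1} ds − (1/Γ(α)) ∫₀^{t₁} g(t₁,s)(t₁−s)^{α−1} ds| ≤ (1/Γ(α+1))·[2ε^α·M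 + T^α·ω_d(ε)], where M = sup{|g(t,s)| : 0 ≤ s ≤ t ≤ T}. -/
open Real intervalIntegral
open MeasureTheory

/-- Key modulus-of-continuity estimate (eq. (3.3) of the paper): if `g` is continuous
on the triangle `{(t,s) : 0 ≤ s ≤ t ≤ T}`, bounded by `M` there, with modulus
`ω_d(ε)` in the first variable, then for `t₁ ≤ t₂` in `[0,T]` with `t₂ - t₁ ≤ ε`,
the fractional integrals differ by at most `(2ε^α M + T^α ω_d(ε))/Γ(α+1)`. -/
theorem stmt19 (α T ε : ℝ) (hα : 0 < α) (hα1 : α < 1) (hT : 0 < T) (hε : 0 < ε)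
    (g : ℝ → ℝ → ℝ)
    (hg : ContinuousOn (fun p : ℝ × ℝ => g p.1 p.2) (Set.Ici 0 ×ˢ Set.Ici 0))
    (M ωd : ℝ)
    (hM : ∀ t s : ℝ, 0 ≤ s → s ≤ t → t ≤ T → |g t s| ≤ M)
    (hω : ∀ s t₁ t₂ : ℝ, s ∈ Set.Icc 0 T → t₁ ∈ Set.Icc 0 T → t₂ ∈ Set.Icc 0 T →
      s ≤ t₁ → s ≤ t₂ → |t₂ - t₁| ≤ ε → |g t₂ s - g t₁ s| ≤ ωd)
    (t₁ t₂ : ℝ) (ht₁ : t₁ ∈ Set.Icc 0 T) (ht₂ : t₂ ∈ Set.Icc 0 T)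
    (h12 : t₁ ≤ t₂) (hd : t₂ - t₁ ≤ ε) :
    |(1 / Real.Gamma α) * (∫ s in (0:ℝ)..t₂, g t₂ s * (t₂ - s) ^ (α - 1)) -
     (1 / Real.Gamma α) * (∫ s in (0:ℝ)..t₁, g t₁ s * (t₁ - s) ^ (α - 1))| ≤
      (1 / Real.Gamma (α + 1)) * (2 * ε ^ α * M + T ^ α * ωd) := by
  obtain ⟨ht₁0, ht₁T⟩ := ht₁
  obtain ⟨ht₂0, ht₂T⟩ := ht₂
  have hα1' : (-1:ℝ) < α - 1 := by linarith
  have hΓpos : 0 < Real.Gamma α := Real.Gamma_pos_of_pos hα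
  have hΓ1 : Real.Gamma (α + 1) = α * Real.Gamma α := Real.Gamma_add_one hα.ne'
  have hM0 : 0 ≤ M := (abs_nonneg _).trans (hM T T hT.le le_rfl le_rfl)
  have hω0 : 0 ≤ ωd := by
    have := hω 0 0 0 ⟨le_rfl, hT.le⟩ ⟨le_rfl, hT.le⟩ ⟨le_rfl, hT.le⟩ le_rfl le_rfl
      (by simp [hε.le])
    simpa using this
  -- integrability of the rpow kernel
  have hrint : ∀ t a b : ℝ, IntervalIntegrable (fun s => (t - s) ^ (α - 1)) volume a b := by
    intro t a b
    have := (intervalIntegral.intervalIntegrable_rpow'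
      (a := t - a) (b := t - b) hα1').comp_sub_left t
    simpa using this
  -- continuity of g t on Ici 0
  have hgc : ∀ t : ℝ, 0 ≤ t → ContinuousOn (fun s => g t s) (Set.Ici 0) := by
    intro t ht
    exact hg.comp (Continuous.continuousOn (by continuity)) (fun s hs => Set.mk_mem_prod ht hs)
  -- value of the kernel integral
  have hIval : ∀ t a b : ℝ, (∫ s in a..b, (t - s) ^ (α - 1)) = ((t - a) ^ α - (t - b) ^ α) / α := by
    intro t a b
    rw [intervalIntegral.integral_comp_sub_left (fun u => u ^ (α - 1)) t,
      integral_rpow (Or.inl hα1'), show α - 1 + 1 = α by ring]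
  have huIcc1 : Set.uIcc (0:ℝ) t₁ ⊆ Set.Ici (0:ℝ) := by
    rw [Set.uIcc_of_le ht₁0]; exact fun x hx => hx.1
  have huIcc2 : Set.uIcc t₁ t₂ ⊆ Set.Ici (0:ℝ) := by
    rw [Set.uIcc_of_le h12]; exact fun x hx => le_trans ht₁0 hx.1
  -- integrable pieces
  have hAint : IntervalIntegrable (fun s => (g t₂ s - g t₁ s) * (t₁ - s) ^ (α - 1)) volume 0 t₁ :=
    (hrint t₁ 0 t₁).continuousOn_mul
      (((hgc t₂ ht₂0).mono huIcc1).sub ((hgc t₁ ht₁0).mono huIcc1))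
  have hB1 : IntervalIntegrable (fun s => g t₂ s * (t₂ - s) ^ (α - 1)) volume 0 t₁ :=
    (hrint t₂ 0 t₁).continuousOn_mul ((hgc t₂ ht₂0).mono huIcc1)
  have hB2 : IntervalIntegrable (fun s => g t₂ s * (t₁ - s) ^ (α - 1)) volume 0 t₁ :=
    (hrint t₁ 0 t₁).continuousOn_mul ((hgc t₂ ht₂0).mono huIcc1)
  have hBint : IntervalIntegrable
      (fun s => g t₂ s * ((t₂ - s) ^ (α - 1) - (t₁ - s) ^ (α - 1))) volume 0 t₁ := by
    have h := hB1.sub hB2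
    convert h using 1; funext s; ring
  have hCint : IntervalIntegrable (fun s => g t₂ s * (t₂ - s) ^ (α - 1)) volume t₁ t₂ :=
    (hrint t₂ t₁ t₂).continuousOn_mul ((hgc t₂ ht₂0).mono huIcc2)
  have h1int : IntervalIntegrable (fun s => g t₁ s * (t₁ - s) ^ (α - 1)) volume 0 t₁ :=
    (hrint t₁ 0 t₁).continuousOn_mul ((hgc t₁ ht₁0).mono huIcc1)
  -- decomposition
  set A := ∫ s in (0:ℝ)..t₁, (g t₂ s - g t₁ s) * (t₁ - s) ^ (α - 1) with hAdef
  set B := ∫ s in (0:ℝ)..t₁, g t₂ s * ((t₂ - s) ^ (α - 1) - (t₁ - s) ^ (α - 1)) with hBdef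
  set C := ∫ s in t₁..t₂, g t₂ s * (t₂ - s) ^ (α - 1) with hCdef
  have hsplit : (∫ s in (0:ℝ)..t₂, g t₂ s * (t₂ - s) ^ (α - 1)) -
      (∫ s in (0:ℝ)..t₁, g t₁ s * (t₁ - s) ^ (α - 1)) = A + B + C := by
    have hadj : (∫ s in (0:ℝ)..t₁, g t₂ s * (t₂ - s) ^ (α - 1)) + C
        = ∫ s in (0:ℝ)..t₂, g t₂ s * (t₂ - s) ^ (α - 1) :=
      intervalIntegral.integral_add_adjacent_intervals hB1 hCint
    have hab : A + B = (∫ s in (0:ℝ)..t₁, g t₂ s * (t₂ - s) ^ (α - 1)) -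
        (∫ s in (0:ℝ)..t₁, g t₁ s * (t₁ - s) ^ (α - 1)) := by
      rw [hAdef, hBdef, ← intervalIntegral.integral_add hAint hBint,
        ← intervalIntegral.integral_sub hB1 h1int]
      congr 1; funext s; ring
    linarith [hadj, hab]
  -- bound on A
  have hAbd : |A| ≤ ωd * (t₁ ^ α / α) := by
    have h1 : |A| ≤ ∫ s in (0:ℝ)..t₁, |(g t₂ s - g t₁ s) * (t₁ - s) ^ (α - 1)| :=
      intervalIntegral.abs_integral_le_integral_abs ht₁0
    have h2 : (∫ s in (0:ℝ)..t₁, |(g t₂ s - g t₁ s) * (t₁ - s) ^ (α - 1)|)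
        ≤ ∫ s in (0:ℝ)..t₁, ωd * (t₁ - s) ^ (α - 1) := by
      apply intervalIntegral.integral_mono_on ht₁0 hAint.abs ((hrint t₁ 0 t₁).const_mul ωd)
      intro s hs
      rw [abs_mul, abs_of_nonneg (Real.rpow_nonneg (by linarith [hs.2]) _)]
      apply mul_le_mul_of_nonneg_right _ (Real.rpow_nonneg (by linarith [hs.2]) _)
      exact hω s t₁ t₂ ⟨hs.1, le_trans hs.2 ht₁T⟩ ⟨ht₁0, ht₁T⟩ ⟨ht₂0, ht₂T⟩ hs.2
        (le_trans hs.2 h12) (by rwa [abs_of_nonneg (by linarith)])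
    have h3 : (∫ s in (0:ℝ)..t₁, ωd * (t₁ - s) ^ (α - 1)) = ωd * (t₁ ^ α / α) := by
      rw [intervalIntegral.integral_const_mul, hIval]
      rw [sub_zero, sub_self, Real.zero_rpow hα.ne', sub_zero]
    linarith [h1, h2, h3.symm.le, h3.le]
  -- bound on C
  have hCbd : |C| ≤ M * ((t₂ - t₁) ^ α / α) := by
    have h1 : |C| ≤ ∫ s in t₁..t₂, |g t₂ s * (t₂ - s) ^ (α - 1)| :=
      intervalIntegral.abs_integral_le_integral_abs h12
    have h2 : (∫ s in t₁..t₂, |g t₂ s * (t₂ - s) ^ (α - 1)|)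
        ≤ ∫ s in t₁..t₂, M * (t₂ - s) ^ (α - 1) := by
      apply intervalIntegral.integral_mono_on h12 hCint.abs ((hrint t₂ t₁ t₂).const_mul M)
      intro s hs
      rw [abs_mul, abs_of_nonneg (Real.rpow_nonneg (by linarith [hs.2]) _)]
      exact mul_le_mul_of_nonneg_right
        (hM t₂ s (le_trans ht₁0 hs.1) hs.2 ht₂T) (Real.rpow_nonneg (by linarith [hs.2]) _)
    have h3 : (∫ s in t₁..t₂, M * (t₂ - s) ^ (α - 1)) = M * ((t₂ - t₁) ^ α / α) := by
      rw [intervalIntegral.integral_const_mul, hIval]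
      rw [sub_self, Real.zero_rpow hα.ne', sub_zero]
    linarith [h1, h2, h3.le]
  -- bound on B
  have hBbd : |B| ≤ M * ((t₁ ^ α - t₂ ^ α + (t₂ - t₁) ^ α) / α) := by
    have h1 : |B| ≤ ∫ s in (0:ℝ)..t₁, |g t₂ s * ((t₂ - s) ^ (α - 1) - (t₁ - s) ^ (α - 1))| :=
      intervalIntegral.abs_integral_le_integral_abs ht₁0
    have hmono : IntervalIntegrable
        (fun s => M * ((t₁ - s) ^ (α - 1) - (t₂ - s) ^ (α - 1))) volume 0 t₁ :=
      ((hrint t₁ 0 t₁).sub (hrint t₂ 0 t₁)).const_mul M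
    have h2 : (∫ s in (0:ℝ)..t₁, |g t₂ s * ((t₂ - s) ^ (α - 1) - (t₁ - s) ^ (α - 1))|)
        ≤ ∫ s in (0:ℝ)..t₁, M * ((t₁ - s) ^ (α - 1) - (t₂ - s) ^ (α - 1)) := by
      apply intervalIntegral.integral_mono_ae_restrict ht₁0 hBint.abs hmono
      have hne : ∀ᵐ s ∂(MeasureTheory.volume.restrict (Set.Icc (0:ℝ) t₁)), s ≠ t₁ := by
        refine MeasureTheory.ae_restrict_of_ae ?_
        have : MeasureTheory.volume ({t₁} : Set ℝ) = 0 := Real.volume_singleton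
        exact MeasureTheory.compl_mem_ae_iff.2 this
      have hmem : ∀ᵐ s ∂(MeasureTheory.volume.restrict (Set.Icc (0:ℝ) t₁)),
          s ∈ Set.Icc (0:ℝ) t₁ := MeasureTheory.ae_restrict_mem measurableSet_Icc
      filter_upwards [hne, hmem] with s hsne hs
      have hst : s < t₁ := lt_of_le_of_ne hs.2 hsne
      have hpow : (t₂ - s) ^ (α - 1) ≤ (t₁ - s) ^ (α - 1) :=
        Real.rpow_le_rpow_of_nonpos (by linarith) (by linarith) (by linarith)
      rw [abs_mul, abs_sub_comm, abs_of_nonneg (by linarith : (0:ℝ) ≤ (t₁ - s) ^ (α - 1) - (t₂ - s) ^ (α - 1))]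
      exact mul_le_mul_of_nonneg_right (hM t₂ s hs.1 (by linarith) ht₂T) (by linarith)
    have h3 : (∫ s in (0:ℝ)..t₁, M * ((t₁ - s) ^ (α - 1) - (t₂ - s) ^ (α - 1)))
        = M * ((t₁ ^ α - t₂ ^ α + (t₂ - t₁) ^ α) / α) := by
      rw [intervalIntegral.integral_const_mul,
        intervalIntegral.integral_sub (hrint t₁ 0 t₁) (hrint t₂ 0 t₁), hIval, hIval]
      rw [sub_zero, sub_zero, sub_self, Real.zero_rpow hα.ne', sub_zero]
      ring
    linarith [h1, h2, h3.le]
  -- numeric conclusion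
  have h2α : t₁ ^ α ≤ t₂ ^ α := Real.rpow_le_rpow ht₁0 h12 hα.le
  have h1α : t₁ ^ α ≤ T ^ α := Real.rpow_le_rpow ht₁0 ht₁T hα.le
  have h3α : (t₂ - t₁) ^ α ≤ ε ^ α := Real.rpow_le_rpow (by linarith) hd hα.le
  have habc : |A + B + C| ≤ (2 * ε ^ α * M + T ^ α * ωd) / α := by
    have : |A + B + C| ≤ |A| + |B| + |C| := (abs_add_le _ _).trans (by
      have := abs_add_le A B; linarith)
    have hnum : ωd * (t₁ ^ α / α) + M * ((t₁ ^ α - t₂ ^ α + (t₂ - t₁) ^ α) / α)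
        + M * ((t₂ - t₁) ^ α / α) ≤ (2 * ε ^ α * M + T ^ α * ωd) / α := by
      rw [show ωd * (t₁ ^ α / α) + M * ((t₁ ^ α - t₂ ^ α + (t₂ - t₁) ^ α) / α)
          + M * ((t₂ - t₁) ^ α / α)
          = (ωd * t₁ ^ α + M * (t₁ ^ α - t₂ ^ α + (t₂ - t₁) ^ α) + M * (t₂ - t₁) ^ α) / α
          by ring]
      rw [div_le_div_iff_of_pos_right hα]
      nlinarith [mul_le_mul_of_nonneg_left h1α hω0, mul_le_mul_of_nonneg_left h3α hM0,
        mul_le_mul_of_nonneg_left h2α hM0]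
    linarith
  rw [← mul_sub, hsplit, abs_mul, abs_of_nonneg (by positivity : (0:ℝ) ≤ 1 / Real.Gamma α), hΓ1]
  rw [show 1 / (α * Real.Gamma α) * (2 * ε ^ α * M + T ^ α * ωd)
      = 1 / Real.Gamma α * ((2 * ε ^ α * M + T ^ α * ωd) / α) by
        rw [one_div, mul_inv]; ring]
  exact mul_le_mul_of_nonneg_left habc (by positivity)
end
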